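/- arXiv:2111.08265 — 9 statements merged into one kernel-verified Lean document; each statement's English description precedes it below -/
import Mathlib

section
/- For every a ∈ [0,1), m ≥ 1 a natural number, and θ ∈ (0, π), the inequality |sin(mθ) - a·sin((m-1)θ)| / (sin(θ)·√(1 + a² - 2a·cos θ)) ≤ (m - a(m-1))/(1 - a) holds. -/
lemma g_m_key (a : ℝ) (ha0 : 0 ≤ a) (ha1 : a < 1)
    (θ : ℝ) (hθ : θ ∈ Set.Ioo 0 Real.pi) :
    ∀ m : ℕ, 1 ≤ m →
    |Real.sin (m * θ) - a * Real.sin (((m : ℝ) - 1) * θ)|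
      ≤ (((m : ℝ) - a * ((m : ℝ) - 1)) / (1 - a)) *
        (Real.sin θ * Real.sqrt (1 + a ^ 2 - 2 * a * Real.cos θ)) := by
  obtain ⟨hθ0, hθπ⟩ := hθ
  have hs : 0 < Real.sin θ := Real.sin_pos_of_pos_of_lt_pi hθ0 hθπ
  have hcle : Real.cos θ ≤ 1 := Real.cos_le_one θ
  set D := Real.sqrt (1 + a ^ 2 - 2 * a * Real.cos θ) with hDdef
  have hnn : (0:ℝ) ≤ 1 + a ^ 2 - 2 * a * Real.cos θ := by nlinarith [sq_nonneg (1 - a)]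
  have hD2 : D ^ 2 = 1 + a ^ 2 - 2 * a * Real.cos θ := Real.sq_sqrt hnn
  have hD0 : 0 ≤ D := Real.sqrt_nonneg _
  have hDge : 1 - a ≤ D := by nlinarith [hD2, hD0]
  have h1a : (0:ℝ) < 1 - a := by linarith
  intro m hm
  induction m, hm using Nat.le_induction with
  | base =>
      simp only [Nat.cast_one, one_mul, sub_self, zero_mul, Real.sin_zero, mul_zero, sub_zero]
      rw [abs_of_pos hs]
      rw [div_mul_eq_mul_div, le_div_iff₀ h1a]
      nlinarith
  | succ m hm ih =>
      push_cast
      rw [show ((m:ℝ) + 1 - 1) = (m:ℝ) from by ring]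
      have hX : |Real.cos ((m:ℝ) * θ) - a * Real.cos (((m:ℝ) - 1) * θ)| ≤ D := by
        rw [← Real.sqrt_sq_eq_abs]
        apply Real.sqrt_le_sqrt
        have h2 : (m:ℝ) * θ = ((m:ℝ) - 1) * θ + θ := by ring
        rw [h2, Real.cos_add]
        have e1 := Real.sin_sq_add_cos_sq (((m:ℝ) - 1) * θ)
        have e2 := Real.sin_sq_add_cos_sq θ
        nlinarith [sq_nonneg (Real.sin (((m:ℝ) - 1) * θ) * Real.cos θ +
          Real.cos (((m:ℝ) - 1) * θ) * Real.sin θ - a * Real.sin (((m:ℝ) - 1) * θ))]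
      have hsin : Real.sin (((m:ℝ) + 1) * θ) - a * Real.sin ((m:ℝ) * θ)
          = Real.cos θ * (Real.sin ((m:ℝ) * θ) - a * Real.sin (((m:ℝ) - 1) * θ))
            + Real.sin θ * (Real.cos ((m:ℝ) * θ) - a * Real.cos (((m:ℝ) - 1) * θ)) := by
        have h1 : ((m:ℝ) + 1) * θ = (m:ℝ) * θ + θ := by ring
        have h2 : (m:ℝ) * θ = ((m:ℝ) - 1) * θ + θ := by ring
        rw [h1, h2]
        simp only [Real.sin_add, Real.cos_add]
        ring
      have hc1 : |Real.cos θ| ≤ 1 := Real.abs_cos_le_one θ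
      have step : |Real.sin (((m:ℝ) + 1) * θ) - a * Real.sin ((m:ℝ) * θ)|
          ≤ |Real.sin ((m:ℝ) * θ) - a * Real.sin (((m:ℝ) - 1) * θ)| + Real.sin θ * D := by
        rw [hsin]
        calc |Real.cos θ * (Real.sin ((m:ℝ) * θ) - a * Real.sin (((m:ℝ) - 1) * θ))
              + Real.sin θ * (Real.cos ((m:ℝ) * θ) - a * Real.cos (((m:ℝ) - 1) * θ))|
            ≤ |Real.cos θ * (Real.sin ((m:ℝ) * θ) - a * Real.sin (((m:ℝ) - 1) * θ))|
              + |Real.sin θ * (Real.cos ((m:ℝ) * θ) - a * Real.cos (((m:ℝ) - 1) * θ))| :=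
              abs_add_le _ _
          _ ≤ |Real.sin ((m:ℝ) * θ) - a * Real.sin (((m:ℝ) - 1) * θ)| + Real.sin θ * D := by
              rw [abs_mul, abs_mul, abs_of_pos hs]
              have := abs_nonneg (Real.sin ((m:ℝ) * θ) - a * Real.sin (((m:ℝ) - 1) * θ))
              nlinarith
      have heq : (((m:ℝ) + 1) - a * (m:ℝ)) / (1 - a) * (Real.sin θ * D)
          = ((m:ℝ) - a * ((m:ℝ) - 1)) / (1 - a) * (Real.sin θ * D) + Real.sin θ * D := by
        field_simp
        ring
      rw [heq]
      linarith [ih, step]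

theorem g_m_le (a : ℝ) (ha0 : 0 ≤ a) (ha1 : a < 1) (m : ℕ) (hm : 1 ≤ m)
    (θ : ℝ) (hθ : θ ∈ Set.Ioo 0 Real.pi) :
    |Real.sin (m * θ) - a * Real.sin (((m : ℝ) - 1) * θ)| /
      (Real.sin θ * Real.sqrt (1 + a ^ 2 - 2 * a * Real.cos θ))
      ≤ ((m : ℝ) - a * ((m : ℝ) - 1)) / (1 - a) := by
  obtain ⟨hθ0, hθπ⟩ := hθ
  have hs : 0 < Real.sin θ := Real.sin_pos_of_pos_of_lt_pi hθ0 hθπ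
  have hcle : Real.cos θ ≤ 1 := Real.cos_le_one θ
  have hnn : (0:ℝ) ≤ 1 + a ^ 2 - 2 * a * Real.cos θ := by nlinarith [sq_nonneg (1 - a)]
  have hD2 : (Real.sqrt (1 + a ^ 2 - 2 * a * Real.cos θ)) ^ 2
      = 1 + a ^ 2 - 2 * a * Real.cos θ := Real.sq_sqrt hnn
  have hD0 : 0 ≤ Real.sqrt (1 + a ^ 2 - 2 * a * Real.cos θ) := Real.sqrt_nonneg _
  have hDpos : 0 < Real.sqrt (1 + a ^ 2 - 2 * a * Real.cos θ) := by
    nlinarith [hD2, hD0]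
  have hpos : 0 < Real.sin θ * Real.sqrt (1 + a ^ 2 - 2 * a * Real.cos θ) :=
    mul_pos hs hDpos
  rw [div_le_iff₀ hpos]
  exact g_m_key a ha0 ha1 θ ⟨hθ0, hθπ⟩ m hm
end

section
/- For any complex numbers κ and k with k ∉ ℝ, there exists n ∈ ℕ, n ≥ 1, such that |1 + κ·k^(2n)| ≥ 1. -/
open Real

lemma key_id_aux (b c : ℂ) :
    (b * c ^ 2).re + Complex.normSq c * b.re = 2 * c.re * (b * c).re := by
  simp [Complex.mul_re, Complex.mul_im, Complex.normSq_apply, pow_two]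
  ring

theorem exists_abs_one_add_kappa_pow_ge (κ k : ℂ) (hk : k.im ≠ 0) :
    ∃ n : ℕ, 1 ≤ n ∧ 1 ≤ ‖1 + κ * k ^ (2 * n)‖ := by
  by_contra hcon
  push_neg at hcon
  set a := k ^ 2 with ha
  have hre : ∀ n, 1 ≤ n → (κ * a ^ n).re < 0 := by
    intro n hn
    have h1 := hcon n hn
    have h1' : ‖1 + κ * k ^ (2 * n)‖ ^ 2 < 1 := by
      have h0 := norm_nonneg (1 + κ * k ^ (2 * n))
      nlinarith
    have hpow : k ^ (2 * n) = a ^ n := by rw [ha, ← pow_mul]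
    rw [hpow] at h1'
    rw [Complex.sq_norm, Complex.normSq_apply] at h1'
    simp only [Complex.add_re, Complex.add_im, Complex.one_re, Complex.one_im] at h1'
    nlinarith [sq_nonneg (κ * a ^ n).re, sq_nonneg (κ * a ^ n).im]
  have hpos : ∀ j, 1 ≤ j → 0 < (a ^ j).re := by
    intro j hj
    by_contra hle
    push_neg at hle
    have h1 := hre j hj
    have h2 := hre (2 * j) (by omega)
    have h3 := hre (3 * j) (by omega)
    have hid := key_id_aux (κ * a ^ j) (a ^ j)
    have e1 : κ * a ^ j * (a ^ j) ^ 2 = κ * a ^ (3 * j) := by ring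
    have e2 : κ * a ^ j * a ^ j = κ * a ^ (2 * j) := by ring
    rw [e1, e2] at hid
    nlinarith [Complex.normSq_nonneg (a ^ j)]
  have hare : 0 < a.re := by
    have := hpos 1 le_rfl
    rwa [pow_one] at this
  have haim : a.im ≠ 0 := by
    intro h
    have hre2 : a.re = k.re * k.re - k.im * k.im := by
      rw [ha, pow_two, Complex.mul_re]
    have him2 : a.im = k.re * k.im + k.im * k.re := by
      rw [ha, pow_two, Complex.mul_im]
    have hkre : k.re = 0 := by
      rw [him2] at h
      rcases mul_eq_zero.mp (by linarith : k.re * k.im = 0) with h' | h'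
      · exact h'
      · exact absurd h' hk
    rw [hre2, hkre] at hare
    nlinarith [sq_nonneg k.im, hk]
  have hane : a ≠ 0 := by
    intro h
    rw [h] at haim
    simp at haim
  set θ₀ := Complex.arg a with hθ₀
  have habs : |θ₀| < π / 2 := Complex.abs_arg_lt_pi_div_two_iff.mpr (Or.inl hare)
  have hθ₀ne : θ₀ ≠ 0 := by
    intro h
    have := Complex.arg_eq_zero_iff.mp h
    exact haim this.2
  set θ := |θ₀| with hθ
  have hθpos : 0 < θ := abs_pos.mpr hθ₀ne
  have hθlt : θ < π / 2 := habs
  have hrepow : ∀ j : ℕ, (a ^ j).re = ‖a‖ ^ j * Real.cos (j * θ) := by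
    intro j
    conv_lhs => rw [← Complex.norm_mul_exp_arg_mul_I a]
    rw [mul_pow, ← Complex.exp_nat_mul]
    have : (j : ℂ) * (↑θ₀ * Complex.I) = (↑((j : ℝ) * θ₀)) * Complex.I := by
      push_cast; ring
    rw [this, ← Complex.ofReal_pow, Complex.re_ofReal_mul,
      Complex.exp_ofReal_mul_I_re]
    congr 1
    rw [hθ, ← Real.cos_abs ((j : ℝ) * θ₀), abs_mul, Nat.abs_cast]
  set n := ⌈π / (2 * θ)⌉₊ with hn
  have hquotpos : 0 < π / (2 * θ) := by positivity
  have hn1 : 1 ≤ n := Nat.one_le_iff_ne_zero.mpr (by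
    intro h
    have := Nat.ceil_eq_zero.mp h
    linarith)
  have hge : π / 2 ≤ (n : ℝ) * θ := by
    have h1 : π / (2 * θ) ≤ (n : ℝ) := Nat.le_ceil _
    have := (div_le_iff₀ (by positivity : (0:ℝ) < 2 * θ)).mp h1
    nlinarith
  have hlt : (n : ℝ) * θ < π := by
    have h1 : (n : ℝ) < π / (2 * θ) + 1 := Nat.ceil_lt_add_one (le_of_lt hquotpos)
    have h2 : (n : ℝ) * θ < (π / (2 * θ) + 1) * θ := by
      exact mul_lt_mul_of_pos_right h1 hθpos
    have h3 : (π / (2 * θ) + 1) * θ = π / 2 + θ := by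
      field_simp
    rw [h3] at h2
    linarith
  have hcos : Real.cos ((n : ℝ) * θ) ≤ 0 := by
    apply Real.cos_nonpos_of_pi_div_two_le_of_le hge
    linarith [Real.pi_pos]
  have := hpos n hn1
  rw [hrepow n] at this
  have habspos : 0 < ‖a‖ ^ n := pow_pos (norm_pos_iff.mpr hane) n
  nlinarith
end

section
/- Let g : ℕ → ℝ be a positive sequence (indexed by n ≥ 1, with the convention g₀-related terms absent) and define w_n := ((-Δ₀ g)_n)/g_n where (-Δ₀ g)_n = 2g_n - g_{n-1} - g_{n+1} for n ≥ 2 and (-Δ₀ g)_1 = 2g_1 - g_2. Then for any finitely supported complex sequence u : ℕ → ℂ with u_0 = 0, the identity ∑_{n≥1} |u_n - u_{n-1}|² = ∑_{n≥1} w_n |u_n|² + ∑_{n≥2} |√(g_{n-1}/g_n)·u_n - √(g_n/g_{n-1})·u_{n-1}|² holds. -/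
lemma hardy_key (a b : ℝ) (ha : 0 < a) (hb : 0 < b) (x y : ℂ) :
    ‖y - x‖ ^ 2 = ‖(Real.sqrt (a / b) : ℂ) * y - (Real.sqrt (b / a) : ℂ) * x‖ ^ 2
      + (1 - a / b) * ‖y‖ ^ 2 + (1 - b / a) * ‖x‖ ^ 2 := by
  have h1 : Real.sqrt (a / b) * Real.sqrt (b / a) = 1 := by
    rw [← Real.sqrt_mul (by positivity)]
    rw [show a / b * (b / a) = 1 by field_simp]
    exact Real.sqrt_one
  have h2 : Real.sqrt (a / b) ^ 2 = a / b := Real.sq_sqrt (by positivity)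
  have h3 : Real.sqrt (b / a) ^ 2 = b / a := Real.sq_sqrt (by positivity)
  simp only [Complex.sq_norm, Complex.normSq_apply,
    Complex.sub_re, Complex.sub_im, Complex.mul_re, Complex.mul_im,
    Complex.ofReal_re, Complex.ofReal_im]
  linear_combination (-(y.re^2+y.im^2))*h2 + (-(x.re^2+x.im^2))*h3 + (2*(y.re*x.re+y.im*x.im))*h1

theorem generalized_discrete_hardy_identity
    (g : ℕ → ℝ) (hg : ∀ n, 1 ≤ n → 0 < g n)
    (w : ℕ → ℝ) (hw1 : w 1 = (2 * g 1 - g 2) / g 1)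
    (hw : ∀ n, 2 ≤ n → w n = (2 * g n - g (n - 1) - g (n + 1)) / g n)
    (u : ℕ → ℂ) (hu : ∃ N, ∀ n, N ≤ n → u n = 0) (hu0 : u 0 = 0) :
    ∑' n : ℕ, ‖u (n + 1) - u n‖ ^ 2
      = (∑' n : ℕ, w (n + 1) * ‖u (n + 1)‖ ^ 2)
        + ∑' n : ℕ, ‖(Real.sqrt (g (n + 1) / g (n + 2)) : ℂ) * u (n + 2)
            - (Real.sqrt (g (n + 2) / g (n + 1)) : ℂ) * u (n + 1)‖ ^ 2 := by
  obtain ⟨N, hN⟩ := hu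
  set A : ℕ → ℝ := fun n => ‖u (n + 1) - u n‖ ^ 2 with hA
  set B : ℕ → ℝ := fun n => w (n + 1) * ‖u (n + 1)‖ ^ 2 with hB
  set C : ℕ → ℝ := fun n => ‖(Real.sqrt (g (n + 1) / g (n + 2)) : ℂ) * u (n + 2)
      - (Real.sqrt (g (n + 2) / g (n + 1)) : ℂ) * u (n + 1)‖ ^ 2 with hC
  -- the finite telescoping identity
  have main : ∀ M : ℕ,
      (∑ n ∈ Finset.range (M + 1), A n) + (1 - g (M + 2) / g (M + 1)) * ‖u (M + 1)‖ ^ 2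
        = (∑ n ∈ Finset.range (M + 1), B n) + ∑ n ∈ Finset.range M, C n := by
    intro M
    induction M with
    | zero =>
      have hg1 : g 1 ≠ 0 := (hg 1 le_rfl).ne'
      norm_num [hA, hB, hu0, hw1]
      field_simp
      ring
    | succ M ih =>
      have hkey := hardy_key (g (M + 1)) (g (M + 2)) (hg _ (by omega)) (hg _ (by omega))
        (u (M + 1)) (u (M + 2))
      have hwv : w (M + 2) = (2 * g (M + 2) - g (M + 1) - g (M + 3)) / g (M + 2) := by
        have := hw (M + 2) (by omega)
        simpa using this
      have hg2 : g (M + 2) ≠ 0 := (hg _ (by omega)).ne'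
      have hBeq : B (M + 1) = (1 - g (M + 1) / g (M + 2)) * ‖u (M + 2)‖ ^ 2
          + (1 - g (M + 3) / g (M + 2)) * ‖u (M + 2)‖ ^ 2 := by
        simp only [hB, show M + 1 + 1 = M + 2 by ring, hwv]
        field_simp
        ring
      have hAeq : A (M + 1) = C M + (1 - g (M + 1) / g (M + 2)) * ‖u (M + 2)‖ ^ 2
          + (1 - g (M + 2) / g (M + 1)) * ‖u (M + 1)‖ ^ 2 := by
        simp only [hA, hC, show M + 1 + 1 = M + 2 by ring]
        linarith [hkey]
      simp only [show M + 1 + 1 = M + 2 by ring, show M + 1 + 2 = M + 3 by ring]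
      rw [Finset.sum_range_succ A (M + 1), Finset.sum_range_succ B (M + 1),
        Finset.sum_range_succ C M, hAeq, hBeq]
      linarith [ih]
  -- convert tsums to finite sums
  have htA : ∑' n, A n = ∑ n ∈ Finset.range (N + 1), A n := by
    refine tsum_eq_sum fun n hn => ?_
    have hn' : N ≤ n := by simp [Finset.mem_range] at hn; omega
    simp [hA, hN n (by omega), hN (n + 1) (by omega)]
  have htB : ∑' n, B n = ∑ n ∈ Finset.range (N + 1), B n := by
    refine tsum_eq_sum fun n hn => ?_
    have hn' : N ≤ n := by simp [Finset.mem_range] at hn; omega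
    simp [hB, hN (n + 1) (by omega)]
  have htC : ∑' n, C n = ∑ n ∈ Finset.range N, C n := by
    refine tsum_eq_sum fun n hn => ?_
    have hn' : N ≤ n := by simp [Finset.mem_range] at hn; omega
    simp [hC, hN (n + 1) (by omega), hN (n + 2) (by omega)]
  rw [htA, htB, htC]
  have hub : u (N + 1) = 0 := hN _ (by omega)
  have := main N
  rw [hub] at this
  simpa using this
end

section
/- Let g : ℕ → (0,∞) be a positive sequence satisfying 2g_n - g_{n-1} - g_{n+1} ≥ 0 for all n ≥ 2 and 2g_1 - g_2 ≥ 0. Then for every finitely supported u : ℕ → ℂ with u_0 = 0, ∑_{n≥1} w_n |u_n|² ≤ ∑_{n≥1} |u_n - u_{n-1}|², where w_n = (2g_n - g_{n-1} - g_{n+1})/g_n for n ≥ 2 and w_1 = (2g_1 - g_2)/g_1. -/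
theorem generalized_discrete_hardy_inequality
    (g : ℕ → ℝ) (hg : ∀ n, 1 ≤ n → 0 < g n)
    (hsup : ∀ n, 2 ≤ n → 0 ≤ 2 * g n - g (n - 1) - g (n + 1))
    (hsup1 : 0 ≤ 2 * g 1 - g 2)
    (w : ℕ → ℝ) (hw1 : w 1 = (2 * g 1 - g 2) / g 1)
    (hw : ∀ n, 2 ≤ n → w n = (2 * g n - g (n - 1) - g (n + 1)) / g n)
    (u : ℕ → ℂ) (hu : ∃ N, ∀ n, N ≤ n → u n = 0) (hu0 : u 0 = 0) :
    ∑' n : ℕ, w (n + 1) * ‖u (n + 1)‖ ^ 2 ≤ ∑' n : ℕ, ‖u (n + 1) - u n‖ ^ 2 := by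
  obtain ⟨N, hN⟩ := hu
  set G : ℕ → ℝ := fun n => if n = 0 then 0 else g n with hG
  set A : ℕ → ℝ := fun m => (1 - G (m - 1) / G m) * ‖u m‖ ^ 2 with hA
  set B : ℕ → ℝ := fun m => (1 - G (m + 1) / G m) * ‖u m‖ ^ 2 with hB
  -- term-wise inequality
  have key : ∀ n : ℕ, A (n + 1) + B n ≤ ‖u (n + 1) - u n‖ ^ 2 := by
    intro n
    match n with
    | 0 => simp [hA, hB, hG, hu0]
    | (m + 1) =>
      have h1 : 0 < g (m + 1) := hg _ (by omega)
      have h2 : 0 < g (m + 2) := hg _ (by omega)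
      have e1 : G (m + 1 + 1 - 1) = g (m + 1) := by simp [hG]
      have e2 : G (m + 1 + 1) = g (m + 2) := by simp [hG]
      have e3 : G (m + 1) = g (m + 1) := by simp [hG]
      simp only [hA, hB, e1, e2, e3]
      set s : ℝ := ‖u (m + 1 + 1)‖ with hs
      set t : ℝ := ‖u (m + 1)‖ with ht
      have hs0 : 0 ≤ s := norm_nonneg _
      have ht0 : 0 ≤ t := norm_nonneg _
      have key2 : 2 * s * t ≤ g (m + 1) / g (m + 2) * s ^ 2 +
          g (m + 2) / g (m + 1) * t ^ 2 := by
        rw [div_mul_eq_mul_div, div_mul_eq_mul_div,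
          div_add_div _ _ (ne_of_gt h2) (ne_of_gt h1),
          le_div_iff₀ (by positivity)]
        nlinarith [sq_nonneg (g (m + 1) * s - g (m + 2) * t)]
      have key3 : (s - t) ^ 2 ≤ ‖u (m + 1 + 1) - u (m + 1)‖ ^ 2 := by
        have hnn : 0 ≤ ‖u (m + 1 + 1) - u (m + 1)‖ := norm_nonneg _
        have hst : s - t ≤ ‖u (m + 1 + 1) - u (m + 1)‖ := by
          simpa [hs, ht] using norm_sub_norm_le (u (m + 1 + 1)) (u (m + 1))
        have hts : t - s ≤ ‖u (m + 1 + 1) - u (m + 1)‖ := by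
          have := norm_sub_norm_le (u (m + 1)) (u (m + 1 + 1))
          rwa [norm_sub_rev] at this
        nlinarith
      nlinarith
  -- term-wise identity w (m+1) * ‖u (m+1)‖^2 = A (m+1) + B (m+1)
  have wAB : ∀ m : ℕ, w (m + 1) * ‖u (m + 1)‖ ^ 2 = A (m + 1) + B (m + 1) := by
    intro m
    match m with
    | 0 =>
      have h1 : g 1 ≠ 0 := ne_of_gt (hg 1 le_rfl)
      simp only [hA, hB, hG, hw1]
      norm_num
      field_simp
      ring
    | (k + 1) =>
      have h1 : g (k + 2) ≠ 0 := ne_of_gt (hg _ (by omega))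
      have hwn := hw (k + 2) (by omega)
      have e0 : (k + 2 : ℕ) - 1 = k + 1 := rfl
      rw [e0] at hwn
      have e1 : G (k + 1 + 1 - 1) = g (k + 1) := by simp [hG]
      have e2 : G (k + 1 + 1 + 1) = g (k + 3) := by simp [hG]
      have e3 : G (k + 1 + 1) = g (k + 2) := by simp [hG]
      simp only [hA, hB, e1, e2, e3]
      rw [show (k + 1 + 1 : ℕ) = k + 2 from rfl, hwn,
        show (k + 2 + 1 : ℕ) = k + 3 from rfl]
      field_simp
      ring
  -- reduce tsums to finite sums
  have hL : ∑' n : ℕ, w (n + 1) * ‖u (n + 1)‖ ^ 2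
      = ∑ n ∈ Finset.range N, w (n + 1) * ‖u (n + 1)‖ ^ 2 := by
    refine tsum_eq_sum ?_
    intro n hn
    have : N ≤ n := by simpa using hn
    rw [hN (n + 1) (by omega), norm_zero]
    ring
  have hR : ∑' n : ℕ, ‖u (n + 1) - u n‖ ^ 2
      = ∑ n ∈ Finset.range N, ‖u (n + 1) - u n‖ ^ 2 := by
    refine tsum_eq_sum ?_
    intro n hn
    have : N ≤ n := by simpa using hn
    rw [hN (n + 1) (by omega), hN n (by omega)]
    simp
  -- shift the B-sum
  have hB0 : B 0 = 0 := by simp [hB, hu0]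
  have hBN : B N = 0 := by simp [hB, hN N le_rfl]
  have hshift : ∑ n ∈ Finset.range N, B (n + 1) = ∑ n ∈ Finset.range N, B n := by
    have h1 := Finset.sum_range_succ' B N
    have h2 := Finset.sum_range_succ B N
    rw [h2] at h1
    linarith
  rw [hL, hR]
  calc ∑ n ∈ Finset.range N, w (n + 1) * ‖u (n + 1)‖ ^ 2
      = ∑ n ∈ Finset.range N, (A (n + 1) + B (n + 1)) := by
        exact Finset.sum_congr rfl fun n _ => wAB n
    _ = (∑ n ∈ Finset.range N, A (n + 1)) + ∑ n ∈ Finset.range N, B (n + 1) :=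
        Finset.sum_add_distrib
    _ = (∑ n ∈ Finset.range N, A (n + 1)) + ∑ n ∈ Finset.range N, B n := by
        rw [hshift]
    _ = ∑ n ∈ Finset.range N, (A (n + 1) + B n) := Finset.sum_add_distrib.symm
    _ ≤ ∑ n ∈ Finset.range N, ‖u (n + 1) - u n‖ ^ 2 :=
        Finset.sum_le_sum fun n _ => key n
end

section
/- For every q ∈ (0, 1/2] and every finitely supported u : ℕ → ℂ with u_0 = 0, one has ∑_{n≥1} (2 - (1 - 1/n)^q - (1 + 1/n)^q) |u_n|² ≤ ∑_{n≥1} |u_n - u_{n-1}|². -/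
lemma hardy_key_aux (c0 c1 : ℝ) (h0 : 0 ≤ c0) (h1 : 0 ≤ c1) (v w : ℂ) :
    c1 * (c1 - c0) * Complex.normSq w + c0 * (c0 - c1) * Complex.normSq v
      ≤ Complex.normSq ((c1 : ℂ) * w - (c0 : ℂ) * v) := by
  have h := mul_nonneg (mul_nonneg h0 h1) (Complex.normSq_nonneg (w - v))
  simp only [Complex.normSq_apply, Complex.sub_re, Complex.sub_im, Complex.mul_re,
    Complex.mul_im, Complex.ofReal_re, Complex.ofReal_im] at *
  nlinarith [h]

theorem optimal_hardy_inequality_q (q : ℝ) (hq0 : 0 < q) (hq : q ≤ 1 / 2)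
    (u : ℕ → ℂ) (hu : ∃ N, ∀ n, N ≤ n → u n = 0) (hu0 : u 0 = 0) :
    ∑' n : ℕ, (2 - (1 - 1 / ((n : ℝ) + 1)) ^ q - (1 + 1 / ((n : ℝ) + 1)) ^ q) * ‖u (n + 1)‖ ^ 2
      ≤ ∑' n : ℕ, ‖u (n + 1) - u n‖ ^ 2 := by
  obtain ⟨N, hN⟩ := hu
  set g : ℕ → ℝ := fun n => (n : ℝ) ^ q with hg
  have hg0 : g 0 = 0 := by simp [hg, Real.zero_rpow hq0.ne']
  have hgpos : ∀ n : ℕ, 0 < g (n + 1) := by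
    intro n
    exact Real.rpow_pos_of_pos (by positivity) q
  have hgnn : ∀ n : ℕ, 0 ≤ g n := by
    intro n
    exact Real.rpow_nonneg (Nat.cast_nonneg n) q
  set v : ℕ → ℂ := fun n => ((g n)⁻¹ : ℝ) * u n with hv
  have huv : ∀ n, u n = (g n : ℂ) * v n := by
    intro n
    cases n with
    | zero => simp [hv, hu0]
    | succ m =>
      have : (g (m + 1) : ℂ) ≠ 0 := by
        exact_mod_cast (hgpos m).ne'
      simp only [hv]
      field_simp
      simp [this]
  set D : ℕ → ℝ := fun n => g n * (g (n + 1) - g n) * Complex.normSq (v n) with hD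
  have hD0 : D 0 = 0 := by simp [hD, hg0]
  have hDN : D N = 0 := by
    simp [hD, hv, hN N le_rfl]
  -- rewrite the weights
  have hw1 : ∀ n : ℕ, (1 - 1 / ((n : ℝ) + 1)) ^ q = g n / g (n + 1) := by
    intro n
    have h1 : ((n : ℝ) + 1) ≠ 0 := by positivity
    have he : (1 : ℝ) - 1 / ((n : ℝ) + 1) = (n : ℝ) / ((n : ℝ) + 1) := by
      field_simp
      ring
    rw [he, Real.div_rpow (Nat.cast_nonneg n) (by positivity)]
    have hc : ((n + 1 : ℕ) : ℝ) = (n : ℝ) + 1 := by push_cast; ring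
    simp [hg, hc]
  have hw2 : ∀ n : ℕ, (1 + 1 / ((n : ℝ) + 1)) ^ q = g (n + 2) / g (n + 1) := by
    intro n
    have h1 : ((n : ℝ) + 1) ≠ 0 := by positivity
    have he : (1 : ℝ) + 1 / ((n : ℝ) + 1) = ((n : ℝ) + 2) / ((n : ℝ) + 1) := by
      field_simp
      ring
    rw [he, Real.div_rpow (by positivity) (by positivity)]
    simp only [hg]
    push_cast
    ring_nf
  -- pointwise inequality
  have hpt : ∀ n : ℕ,
      (2 - (1 - 1 / ((n : ℝ) + 1)) ^ q - (1 + 1 / ((n : ℝ) + 1)) ^ q) * ‖u (n + 1)‖ ^ 2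
        + (D (n + 1) - D n) ≤ ‖u (n + 1) - u n‖ ^ 2 := by
    intro n
    have hc1 : g (n + 1) ≠ 0 := (hgpos n).ne'
    have hnorm1 : ‖u (n + 1)‖ ^ 2 = g (n + 1) * g (n + 1) * Complex.normSq (v (n + 1)) := by
      rw [Complex.sq_norm, huv (n + 1), Complex.normSq_mul,
        Complex.normSq_ofReal]
    have hnorm2 : ‖u (n + 1) - u n‖ ^ 2
        = Complex.normSq ((g (n + 1) : ℂ) * v (n + 1) - (g n : ℂ) * v n) := by
      rw [Complex.sq_norm, huv (n + 1), huv n]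
    rw [hw1, hw2, hnorm1, hnorm2, hD]
    have key := hardy_key_aux (g n) (g (n + 1)) (hgnn n) (hgnn (n + 1)) (v n) (v (n + 1))
    have halg : (2 - g n / g (n + 1) - g (n + 2) / g (n + 1)) *
          (g (n + 1) * g (n + 1) * Complex.normSq (v (n + 1)))
        + (g (n + 1) * (g (n + 1 + 1) - g (n + 1)) * Complex.normSq (v (n + 1))
          - g n * (g (n + 1) - g n) * Complex.normSq (v n))
        = g (n + 1) * (g (n + 1) - g n) * Complex.normSq (v (n + 1))
          + g n * (g n - g (n + 1)) * Complex.normSq (v n) := by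
      have h22 : n + 1 + 1 = n + 2 := rfl
      rw [h22]
      field_simp
      ring
    rw [halg]
    exact key
  -- reduce tsums to finite sums
  rw [tsum_eq_sum (s := Finset.range N)
      (f := fun n : ℕ => (2 - (1 - 1 / ((n : ℝ) + 1)) ^ q - (1 + 1 / ((n : ℝ) + 1)) ^ q)
        * ‖u (n + 1)‖ ^ 2)
      (by
        intro b hb
        rw [Finset.mem_range, not_lt] at hb
        simp [hN (b + 1) (le_trans hb (Nat.le_succ b))]),
    tsum_eq_sum (s := Finset.range N)
      (f := fun n : ℕ => ‖u (n + 1) - u n‖ ^ 2)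
      (by
        intro b hb
        rw [Finset.mem_range, not_lt] at hb
        simp [hN (b + 1) (le_trans hb (Nat.le_succ b)), hN b hb])]
  have hsum := Finset.sum_le_sum (fun n _ => hpt n) (s := Finset.range N)
  rw [Finset.sum_add_distrib, Finset.sum_range_sub D N, hDN, hD0] at hsum
  linarith [hsum]
end

section
/- For every integer n ≥ 1, the optimal discrete Hardy weight satisfies 2 - √(1 - 1/n) - √(1 + 1/n) > 1/(4n²). -/
theorem optimal_hardy_weight_gt (n : ℕ) (hn : 1 ≤ n) :
    1 / (4 * (n : ℝ) ^ 2) < 2 - Real.sqrt (1 - 1 / (n : ℝ)) - Real.sqrt (1 + 1 / (n : ℝ)) := by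
  have hn1 : (1:ℝ) ≤ n := by exact_mod_cast hn
  set x : ℝ := 1 / (n : ℝ) with hxdef
  have hx0 : 0 < x := div_pos one_pos (by linarith)
  have hx1 : x ≤ 1 := by
    rw [hxdef, div_le_one (by linarith)]; linarith
  set a := Real.sqrt (1 - x) with hadef
  set b := Real.sqrt (1 + x) with hbdef
  have ha0 : 0 ≤ a := Real.sqrt_nonneg _
  have hb0 : 0 ≤ b := Real.sqrt_nonneg _
  have ha : a ^ 2 = 1 - x := Real.sq_sqrt (by linarith)
  have hb : b ^ 2 = 1 + x := Real.sq_sqrt (by linarith)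
  have hab : a * b = Real.sqrt (1 - x ^ 2) := by
    rw [hadef, hbdef, ← Real.sqrt_mul (by linarith)]
    ring_nf
  have hx2 : x ^ 2 ≤ 1 := by nlinarith
  have hkey : Real.sqrt (1 - x ^ 2) ≤ 1 - x ^ 2 / 2 := by
    have h1 : 1 - x ^ 2 ≤ (1 - x ^ 2 / 2) ^ 2 := by nlinarith
    calc Real.sqrt (1 - x ^ 2) ≤ Real.sqrt ((1 - x ^ 2 / 2) ^ 2) := Real.sqrt_le_sqrt h1
      _ = 1 - x ^ 2 / 2 := Real.sqrt_sq (by nlinarith)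
  have hx4 : 0 < x ^ 4 := by positivity
  have hsum : (a + b) ^ 2 < (2 - x ^ 2 / 4) ^ 2 := by nlinarith
  have hfin : a + b < 2 - x ^ 2 / 4 :=
    lt_of_pow_lt_pow_left₀ 2 (by nlinarith) hsum
  have hxe : x ^ 2 / 4 = 1 / (4 * (n : ℝ) ^ 2) := by
    rw [hxdef]; field_simp
  linarith
end

section
/- Let a ∈ ℂ with |a| ≤ 1 and let J_a be the operator on ℓ²(ℕ) given by (J_a ψ)_1 = aψ_1 + ψ_2 and (J_a ψ)_n = ψ_{n-1} + ψ_{n+1} for n ≥ 2. Then J_a has no eigenvalues: if J_a ψ = z ψ for some z ∈ ℂ and ψ ∈ ℓ²(ℕ), then ψ = 0. -/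
theorem Ja_no_eigenvalues (a : ℂ) (ha : ‖a‖ ≤ 1)
    (z : ℂ) (ψ : ℕ → ℂ) (hℓ2 : Memℓp (fun n : ℕ => ψ (n + 1)) 2)
    (h1 : a * ψ 1 + ψ 2 = z * ψ 1)
    (hrec : ∀ n, 2 ≤ n → ψ (n - 1) + ψ (n + 1) = z * ψ n) :
    ∀ n, 1 ≤ n → ψ n = 0 := by
  -- find a root r of r^2 - z r + 1 = 0 with |r| ≤ 1
  obtain ⟨r, hr0, hrabs, hroot⟩ : ∃ r : ℂ, r ≠ 0 ∧ ‖r‖ ≤ 1 ∧ r ^ 2 + 1 = z * r := by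
    obtain ⟨s, hs⟩ := IsAlgClosed.exists_pow_nat_eq (k := ℂ) (z ^ 2 - 4) (n := 2) (by norm_num)
    have hroot0 : ((z + s) / 2) ^ 2 + 1 = z * ((z + s) / 2) := by linear_combination hs / 4
    have hr00 : (z + s) / 2 ≠ 0 := by
      intro h; rw [h] at hroot0; simp at hroot0
    have invroot : ∀ w : ℂ, w ≠ 0 → w ^ 2 + 1 = z * w → (w⁻¹) ^ 2 + 1 = z * w⁻¹ := by
      intro w hw h
      field_simp
      linear_combination h
    by_cases hle : ‖(z + s) / 2‖ ≤ 1
    · exact ⟨_, hr00, hle, hroot0⟩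
    · refine ⟨_, inv_ne_zero hr00, ?_, invroot _ hr00 hroot0⟩
      rw [norm_inv]
      exact inv_le_one_of_one_le₀ (le_of_lt (not_le.mp hle))
  -- ψ (n+1) tends to 0
  have htend : Filter.Tendsto (fun n : ℕ => ψ (n + 1)) Filter.atTop (nhds 0) := by
    have hsum := hℓ2.summable (by norm_num)
    have h2 := hsum.tendsto_atTop_zero
    rw [tendsto_zero_iff_norm_tendsto_zero]
    have h3 := h2.sqrt
    rw [Real.sqrt_zero] at h3
    convert h3 using 2 with n
    rw [show (ENNReal.toReal 2) = (2 : ℝ) by norm_num, Real.rpow_two,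
      Real.sqrt_sq (norm_nonneg _)]
  -- the sequence ψ(n+2) - r ψ(n+1) is geometric with ratio r⁻¹
  have hu : ∀ n : ℕ, r * (ψ (n + 3) - r * ψ (n + 2)) = ψ (n + 2) - r * ψ (n + 1) := by
    intro n
    have h := hrec (n + 2) (by omega)
    have he : (n + 2) - 1 = n + 1 := by omega
    rw [he] at h
    linear_combination r * h - ψ (n + 2) * hroot
  have hgeo : ∀ n : ℕ, r ^ n * (ψ (n + 2) - r * ψ (n + 1)) = ψ 2 - r * ψ 1 := by
    intro n
    induction n with
    | zero => simp
    | succ m ih =>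
      calc r ^ (m + 1) * (ψ (m + 1 + 2) - r * ψ (m + 1 + 1))
          = r ^ m * (r * (ψ (m + 3) - r * ψ (m + 2))) := by ring_nf
        _ = r ^ m * (ψ (m + 2) - r * ψ (m + 1)) := by rw [hu m]
        _ = ψ 2 - r * ψ 1 := ih
  -- ℓ² decay kills the geometric term
  have hc0 : ψ 2 - r * ψ 1 = 0 := by
    have ht2 : Filter.Tendsto (fun n : ℕ => ψ (n + 2) - r * ψ (n + 1)) Filter.atTop (nhds 0) := by
      have hA : Filter.Tendsto (fun n : ℕ => ψ (n + 2)) Filter.atTop (nhds 0) :=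
        htend.comp (Filter.tendsto_add_atTop_nat 1)
      have := hA.sub (htend.const_mul r)
      simpa using this
    have htn := ht2.norm
    simp only [norm_zero] at htn
    have hb : ∀ n : ℕ, ‖ψ 2 - r * ψ 1‖ ≤ ‖ψ (n + 2) - r * ψ (n + 1)‖ := by
      intro n
      calc ‖ψ 2 - r * ψ 1‖ = ‖r ^ n * (ψ (n + 2) - r * ψ (n + 1))‖ := by rw [hgeo n]
        _ = ‖r‖ ^ n * ‖ψ (n + 2) - r * ψ (n + 1)‖ := by rw [norm_mul, norm_pow]
        _ ≤ 1 * ‖ψ (n + 2) - r * ψ (n + 1)‖ := by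
            apply mul_le_mul_of_nonneg_right _ (norm_nonneg _)
            exact pow_le_one₀ (norm_nonneg _) hrabs
        _ = ‖ψ (n + 2) - r * ψ (n + 1)‖ := one_mul _
    have := ge_of_tendsto' htn hb
    have h0 : ‖ψ 2 - r * ψ 1‖ = 0 := le_antisymm this (norm_nonneg _)
    exact norm_eq_zero.mp h0
  -- so ψ is a pure geometric sequence
  have hpow : ∀ n : ℕ, ψ (n + 1) = r ^ n * ψ 1 := by
    intro n
    induction n with
    | zero => simp
    | succ m ih =>
      have h := hgeo m
      rw [hc0, mul_eq_zero] at h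
      rcases h with h | h
      · exact absurd h (pow_ne_zero m hr0)
      · have : ψ (m + 2) = r * ψ (m + 1) := by linear_combination h
        rw [show m + 1 + 1 = m + 2 from rfl, this, ih, pow_succ]
        ring
  -- boundary condition
  have hb : (a * r - 1) * ψ 1 = 0 := by
    linear_combination r * h1 - r * hc0 - ψ 1 * hroot
  have hψ1 : ψ 1 = 0 := by
    rcases mul_eq_zero.mp hb with h | h
    · -- a * r = 1, so |r| = 1, so |ψ(n+1)| = |ψ 1| constant → 0
      have har : a * r = 1 := by linear_combination h
      have habs : ‖a‖ * ‖r‖ = 1 := by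
        rw [← norm_mul, har, norm_one]
      have hr1 : ‖r‖ = 1 := by
        have h2' : ‖a‖ * ‖r‖ ≤ ‖r‖ :=
          mul_le_of_le_one_left (norm_nonneg r) ha
        linarith
      have hconst : ∀ n : ℕ, ‖ψ (n + 1)‖ = ‖ψ 1‖ := by
        intro n
        rw [hpow n, norm_mul, norm_pow]
        show ‖r‖ ^ n * _ = _
        rw [hr1, one_pow, one_mul]
      have htn := htend.norm
      simp only [norm_zero] at htn
      have : Filter.Tendsto (fun _ : ℕ => ‖ψ 1‖) Filter.atTop (nhds 0) := by
        convert htn using 1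
        exact funext fun n => (hconst n).symm
      have := tendsto_nhds_unique this tendsto_const_nhds
      exact norm_eq_zero.mp this.symm
    · exact h
  intro n hn
  obtain ⟨m, rfl⟩ : ∃ m, n = m + 1 := ⟨n - 1, by omega⟩
  rw [hpow m, hψ1, mul_zero]
end

section
/- There is no nontrivial Hardy inequality for the discrete Neumann Laplacian: if w : ℕ → [0,∞) is such that ∑_{n≥1} w_n |u_n|² ≤ ∑_{n≥1} |u_{n+1} - u_n|² for all finitely supported u : ℕ → ℂ, then w_n = 0 for all n. -/
theorem no_hardy_for_neumann (w : ℕ → ℝ) (hw : ∀ n, 0 ≤ w n)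
    (h : ∀ u : ℕ → ℂ, (∃ N, ∀ n, N ≤ n → u n = 0) →
      ∑' n : ℕ, w (n + 1) * ‖u (n + 1)‖ ^ 2 ≤ ∑' n : ℕ, ‖u (n + 2) - u (n + 1)‖ ^ 2) :
    ∀ n, 1 ≤ n → w n = 0 := by
  intro n hn
  have key : ∀ M : ℕ, 1 ≤ M → w n ≤ 1 / M := by
    intro M hM
    have hM0 : (M : ℝ) ≠ 0 := by positivity
    set u : ℕ → ℂ := fun j => ((min M (n + M - j) : ℕ) : ℂ) / M with hu
    have hsupp : ∀ j, n + M ≤ j → u j = 0 := by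
      intro j hj
      simp [hu, Nat.sub_eq_zero_of_le hj]
    have hineq := h u ⟨n + M, hsupp⟩
    -- f : LHS terms
    set f : ℕ → ℝ := fun k => w (k + 1) * ‖u (k + 1)‖ ^ 2 with hf
    set g : ℕ → ℝ := fun k => ‖u (k + 2) - u (k + 1)‖ ^ 2 with hg
    have hfzero : ∀ k ∉ Finset.range (n + M), f k = 0 := by
      intro k hk
      simp only [Finset.mem_range, not_lt] at hk
      have : u (k + 1) = 0 := hsupp _ (by omega)
      simp [hf, this]
    have hfsum : Summable f := summable_of_ne_finset_zero hfzero
    have h1 : w n ≤ ∑' k : ℕ, f k := by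
      have h2 : f (n - 1) ≤ ∑' k : ℕ, f k := by
        apply Summable.le_tsum hfsum
        intro i _
        exact mul_nonneg (hw _) (by positivity)
      have h3 : f (n - 1) = w n := by
        have hn1 : n - 1 + 1 = n := by omega
        have hun : u n = 1 := by
          have : n + M - n = M := by omega
          have hMc : (M : ℂ) ≠ 0 := Nat.cast_ne_zero.mpr (by omega)
          simp [hu, this, div_self hMc]
        simp [hf, hn1, hun]
      linarith
    have h4 : ∑' k : ℕ, g k = 1 / M := by
      have hgzero : ∀ k ∉ Finset.Ico (n - 1) (n + M - 1), g k = 0 := by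
        intro k hk
        simp only [Finset.mem_Ico, not_and, not_lt] at hk
        rcases lt_or_ge k (n - 1) with hk1 | hk1
        · -- k + 2 ≤ n, both values are 1
          have e1 : min M (n + M - (k + 1)) = M := by omega
          have e2 : min M (n + M - (k + 2)) = M := by omega
          simp [hg, hu, e1, e2]
        · have hk2 : n + M - 1 ≤ k := hk hk1
          have : u (k + 1) = 0 := hsupp _ (by omega)
          have h2 : u (k + 2) = 0 := hsupp _ (by omega)
          simp [hg, this, h2]
      rw [tsum_eq_sum hgzero]
      have hgval : ∀ k ∈ Finset.Ico (n - 1) (n + M - 1), g k = (1 / M) ^ 2 := by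
        intro k hk
        simp only [Finset.mem_Ico] at hk
        have e1 : min M (n + M - (k + 1)) = n + M - k - 1 := by omega
        have e2 : min M (n + M - (k + 2)) = n + M - k - 2 := by omega
        have e3 : n + M - k - 1 = (n + M - k - 2) + 1 := by omega
        have : u (k + 2) - u (k + 1) = -(1 / M) := by
          simp only [hu, e1, e2, e3]
          push_cast
          field_simp
          ring
        rw [hg]
        simp only [this]
        rw [norm_neg]
        rw [norm_div]
        simp [Complex.norm_natCast]
      rw [Finset.sum_congr rfl hgval]
      rw [Finset.sum_const, Nat.card_Ico]
      have : n + M - 1 - (n - 1) = M := by omega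
      rw [this]
      rw [nsmul_eq_mul]
      field_simp
    calc w n ≤ ∑' k : ℕ, f k := h1
      _ ≤ ∑' k : ℕ, g k := hineq
      _ = 1 / M := h4
  have htend : Filter.Tendsto (fun M : ℕ => 1 / (M : ℝ)) Filter.atTop (nhds 0) :=
    tendsto_one_div_atTop_nhds_zero_nat
  have hle : w n ≤ 0 :=
    ge_of_tendsto htend (Filter.eventually_atTop.mpr ⟨1, key⟩)
  linarith [hw n]
end

section
/- Define ξ^N : ℕ → ℝ for N ≥ 2 by ξ^N_n = 1 for n < N, ξ^N_n = (2 log N - log n)/log N for N ≤ n ≤ N², and ξ^N_n = 0 for n > N². Then for every q ∈ (0, 1/2], the sums S_N := ∑_{n≥2} n^q (n-1)^q |ξ^N_n - ξ^N_{n-1}|² satisfy S_N ≤ 4/log N, and in particular S_N → 0 as N → ∞. -/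
/-- The cut-off sequence `ξ^N`. -/
noncomputable def xi (N n : ℕ) : ℝ :=
  if n < N then 1
  else if n ≤ N ^ 2 then (2 * Real.log N - Real.log n) / Real.log N
  else 0

open Finset Filter Real

lemma xi_aux_log_sq (N : ℕ) : Real.log ((N ^ 2 : ℕ) : ℝ) = 2 * Real.log N := by
  push_cast
  rw [Real.log_pow]
  push_cast
  ring

lemma xi_term_zero (N n : ℕ) (hN : 2 ≤ N) (hn : N ^ 2 ≤ n + 1) :
    xi N (n + 2) - xi N (n + 1) = 0 := by
  have hNN : N ≤ N ^ 2 := by nlinarith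
  have h2 : xi N (n + 2) = 0 := by
    rw [xi, if_neg (by omega), if_neg (by omega)]
  have h1 : xi N (n + 1) = 0 := by
    rcases eq_or_lt_of_le hn with h | h
    · rw [xi, if_neg (by omega), if_pos (by omega)]
      have hcast : ((n + 1 : ℕ) : ℝ) = ((N : ℝ)) ^ 2 := by
        rw [← h]; push_cast; ring
      rw [hcast, Real.log_pow]
      norm_num
    · rw [xi, if_neg (by omega), if_neg (by omega)]
  rw [h1, h2]; ring

lemma xi_term_bound (q : ℝ) (hq0 : 0 < q) (hq : q ≤ 1 / 2) (N n : ℕ) (hN : 2 ≤ N)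
    (hn : n + 2 ≤ N ^ 2) :
    ((n : ℝ) + 2) ^ q * ((n : ℝ) + 1) ^ q * |xi N (n + 2) - xi N (n + 1)| ^ 2
      ≤ 2 / (Real.log N) ^ 2 * (Real.log ((n : ℝ) + 2) - Real.log ((n : ℝ) + 1)) := by
  have hN1 : (1 : ℝ) < (N : ℝ) := by exact_mod_cast hN.trans_lt' one_lt_two
  have hL : 0 < Real.log N := Real.log_pos hN1
  have hx1 : (0 : ℝ) < (n : ℝ) + 1 := by positivity
  have hD : 0 ≤ Real.log ((n : ℝ) + 2) - Real.log ((n : ℝ) + 1) :=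
    sub_nonneg.2 (Real.log_le_log (by positivity) (by linarith))
  have hRHS : 0 ≤ 2 / (Real.log N) ^ 2 * (Real.log ((n : ℝ) + 2) - Real.log ((n : ℝ) + 1)) :=
    mul_nonneg (by positivity) hD
  by_cases hc : n + 2 ≤ N
  · -- both xi values equal 1
    have h2 : xi N (n + 2) = 1 := by
      rcases eq_or_lt_of_le hc with h | h
      · rw [xi, if_neg (by omega), if_pos (by nlinarith [hn])]
        rw [show ((n + 2 : ℕ) : ℝ) = (N : ℝ) by exact_mod_cast h]
        field_simp
        ring
      · rw [xi, if_pos h]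
    have h1 : xi N (n + 1) = 1 := by rw [xi, if_pos (by omega)]
    rw [h2, h1]
    simpa using hRHS
  · -- the interesting regime
    push_neg at hc
    set D := Real.log ((n : ℝ) + 2) - Real.log ((n : ℝ) + 1) with hDdef
    have h2 : xi N (n + 2) = (2 * Real.log N - Real.log ((n : ℝ) + 2)) / Real.log N := by
      rw [xi, if_neg (by omega), if_pos hn]
      norm_num
    have h1 : xi N (n + 1) = (2 * Real.log N - Real.log ((n : ℝ) + 1)) / Real.log N := by
      rw [xi, if_neg (by omega), if_pos (by omega)]
      norm_num
    have hdiff : xi N (n + 2) - xi N (n + 1) = -D / Real.log N := by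
      rw [h2, h1, div_sub_div_same]
      congr 1
      rw [hDdef]; ring
    have habs : |xi N (n + 2) - xi N (n + 1)| = D / Real.log N := by
      rw [hdiff, abs_div, abs_of_pos hL, abs_neg, abs_of_nonneg hD]
    -- bound on the power factor
    have hA : ((n : ℝ) + 2) ^ q * ((n : ℝ) + 1) ^ q ≤ (n : ℝ) + 2 := by
      have ha1 : ((n : ℝ) + 1) ^ q ≤ ((n : ℝ) + 2) ^ q :=
        Real.rpow_le_rpow (by positivity) (by linarith) hq0.le
      have ha2 : ((n : ℝ) + 2) ^ q * ((n : ℝ) + 2) ^ q = ((n : ℝ) + 2) ^ (q + q) :=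
        (Real.rpow_add (by positivity) q q).symm
      have ha3 : ((n : ℝ) + 2) ^ (q + q) ≤ ((n : ℝ) + 2) ^ (1 : ℝ) :=
        Real.rpow_le_rpow_of_exponent_le (by linarith) (by linarith)
      calc ((n : ℝ) + 2) ^ q * ((n : ℝ) + 1) ^ q
          ≤ ((n : ℝ) + 2) ^ q * ((n : ℝ) + 2) ^ q :=
            mul_le_mul_of_nonneg_left ha1 (Real.rpow_nonneg (by positivity) q)
        _ = ((n : ℝ) + 2) ^ (q + q) := ha2
        _ ≤ ((n : ℝ) + 2) ^ (1 : ℝ) := ha3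
        _ = (n : ℝ) + 2 := Real.rpow_one _
    -- bound on D
    have hD1 : D ≤ 1 / ((n : ℝ) + 1) := by
      have hlog := Real.log_le_sub_one_of_pos
        (show (0 : ℝ) < ((n : ℝ) + 2) / ((n : ℝ) + 1) by positivity)
      rw [Real.log_div (by positivity) (by positivity)] at hlog
      have heq : ((n : ℝ) + 2) / ((n : ℝ) + 1) - 1 = 1 / ((n : ℝ) + 1) := by
        rw [div_sub_one (ne_of_gt hx1)]
        norm_num
      rw [hDdef]
      linarith [heq ▸ hlog]
    have hmul : D * ((n : ℝ) + 1) ≤ 1 := (le_div_iff₀ hx1).mp hD1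
    have hDle1 : D ≤ 1 := by nlinarith
    have h2D : ((n : ℝ) + 2) * D ≤ 2 := by nlinarith
    have hkey : ((n : ℝ) + 2) * D ^ 2 ≤ 2 * D := by nlinarith
    have hLsq : (0 : ℝ) < (Real.log N) ^ 2 := by positivity
    calc ((n : ℝ) + 2) ^ q * ((n : ℝ) + 1) ^ q * |xi N (n + 2) - xi N (n + 1)| ^ 2
        = ((n : ℝ) + 2) ^ q * ((n : ℝ) + 1) ^ q * (D / Real.log N) ^ 2 := by rw [habs]
      _ ≤ ((n : ℝ) + 2) * (D / Real.log N) ^ 2 :=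
          mul_le_mul_of_nonneg_right hA (by positivity)
      _ = ((n : ℝ) + 2) * D ^ 2 / (Real.log N) ^ 2 := by
          rw [div_pow]; ring
      _ ≤ 2 * D / (Real.log N) ^ 2 := by gcongr
      _ = 2 / (Real.log N) ^ 2 * D := by ring

theorem xi_sum_bound (q : ℝ) (hq0 : 0 < q) (hq : q ≤ 1 / 2) :
    (∀ N : ℕ, 2 ≤ N →
      ∑' n : ℕ, ((n : ℝ) + 2) ^ q * ((n : ℝ) + 1) ^ q * |xi N (n + 2) - xi N (n + 1)| ^ 2
        ≤ 4 / Real.log N)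
    ∧ Filter.Tendsto
        (fun N : ℕ =>
          ∑' n : ℕ, ((n : ℝ) + 2) ^ q * ((n : ℝ) + 1) ^ q * |xi N (n + 2) - xi N (n + 1)| ^ 2)
        Filter.atTop (nhds 0) := by
  have key : ∀ N : ℕ, 2 ≤ N →
      ∑' n : ℕ, ((n : ℝ) + 2) ^ q * ((n : ℝ) + 1) ^ q * |xi N (n + 2) - xi N (n + 1)| ^ 2
        ≤ 4 / Real.log N := by
    intro N hN
    have hN1 : (1 : ℝ) < (N : ℝ) := by exact_mod_cast hN.trans_lt' one_lt_two
    have hL : 0 < Real.log N := Real.log_pos hN1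
    have hN2 : 4 ≤ N ^ 2 := by nlinarith
    set f : ℕ → ℝ := fun n =>
      ((n : ℝ) + 2) ^ q * ((n : ℝ) + 1) ^ q * |xi N (n + 2) - xi N (n + 1)| ^ 2 with hf
    have hzero : ∀ n ∉ Finset.range (N ^ 2 - 1), f n = 0 := by
      intro n hn
      rw [Finset.mem_range, not_lt] at hn
      have : xi N (n + 2) - xi N (n + 1) = 0 := xi_term_zero N n hN (by omega)
      simp [hf, this]
    have hsum : ∑' n, f n = ∑ n ∈ Finset.range (N ^ 2 - 1), f n := tsum_eq_sum hzero
    rw [hsum]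
    have hb : ∑ n ∈ Finset.range (N ^ 2 - 1), f n
        ≤ ∑ n ∈ Finset.range (N ^ 2 - 1),
            (2 / (Real.log N) ^ 2 * (Real.log ((n : ℝ) + 2) - Real.log ((n : ℝ) + 1))) := by
      apply Finset.sum_le_sum
      intro n hn
      rw [Finset.mem_range] at hn
      exact xi_term_bound q hq0 hq N n hN (by omega)
    have htel : ∑ n ∈ Finset.range (N ^ 2 - 1),
        (Real.log ((n : ℝ) + 2) - Real.log ((n : ℝ) + 1)) = 2 * Real.log N := by
      have := Finset.sum_range_sub (fun k => Real.log ((k : ℝ) + 1)) (N ^ 2 - 1)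
      simp only [Nat.cast_add, Nat.cast_one] at this
      have hcast : ((N ^ 2 - 1 : ℕ) : ℝ) + 1 = ((N : ℝ)) ^ 2 := by
        have : (1 : ℕ) ≤ N ^ 2 := by omega
        push_cast [Nat.cast_sub this]
        ring
      calc ∑ n ∈ Finset.range (N ^ 2 - 1),
            (Real.log ((n : ℝ) + 2) - Real.log ((n : ℝ) + 1))
          = ∑ n ∈ Finset.range (N ^ 2 - 1),
            (Real.log (((n : ℕ) + 1 : ℕ) + 1 : ℝ) - Real.log ((n : ℝ) + 1)) := by
            apply Finset.sum_congr rfl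
            intro n _
            push_cast
            ring_nf
        _ = Real.log (((N ^ 2 - 1 : ℕ) : ℝ) + 1) - Real.log ((0 : ℝ) + 1) := by
            exact_mod_cast this
        _ = 2 * Real.log N := by
            rw [hcast]
            simp [Real.log_pow]
    calc ∑ n ∈ Finset.range (N ^ 2 - 1), f n
        ≤ ∑ n ∈ Finset.range (N ^ 2 - 1),
            (2 / (Real.log N) ^ 2 * (Real.log ((n : ℝ) + 2) - Real.log ((n : ℝ) + 1))) := hb
      _ = 2 / (Real.log N) ^ 2 * (2 * Real.log N) := by
          rw [← Finset.mul_sum, htel]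
      _ = 4 / Real.log N := by
          field_simp
          ring
  constructor
  · exact key
  · have hnn : ∀ N : ℕ, 0 ≤ ∑' n : ℕ,
        ((n : ℝ) + 2) ^ q * ((n : ℝ) + 1) ^ q * |xi N (n + 2) - xi N (n + 1)| ^ 2 := by
      intro N
      apply tsum_nonneg
      intro n
      positivity
    have hlim : Filter.Tendsto (fun N : ℕ => 4 / Real.log N) Filter.atTop (nhds 0) :=
      Filter.Tendsto.div_atTop tendsto_const_nhds
        (Real.tendsto_log_atTop.comp tendsto_natCast_atTop_atTop)
    apply squeeze_zero' (Filter.Eventually.of_forall hnn) ?_ hlim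
    filter_upwards [Filter.eventually_ge_atTop 2] with N hN
    exact key N hN
end
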